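/- Let Q ⊆ ℝ^d be compact and convex, let h_1, ..., h_n be open half-spaces whose union covers Q, and suppose the cover is minimal (for each i there is a point p_i ∈ Q covered by h_i and no other h_j). Then n ≤ d+1. -/
import Mathlib

theorem stmt_19 (d n : ℕ) (Q : Set (Fin d → ℝ))
    (hQc : IsCompact Q) (hQconv : Convex ℝ Q)
    (a : Fin n → (Fin d → ℝ)) (c : Fin n → ℝ) (ha : ∀ i, a i ≠ 0)
    (hcov : Q ⊆ ⋃ i, {x : Fin d → ℝ | ∑ k, a i k * x k < c i})
    (p : Fin n → (Fin d → ℝ))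
    (hpQ : ∀ i, p i ∈ Q)
    (hpi : ∀ i, ∑ k, a i k * p i k < c i)
    (hpuniq : ∀ i j, j ≠ i → ¬ (∑ k, a j k * p i k < c j)) :
    n ≤ d + 1 := by
  by_contra hn
  push_neg at hn
  have hdep : ¬ AffineIndependent ℝ p := by
    intro h
    have h1 := h.card_le_finrank_succ
    have h2 : Module.finrank ℝ (vectorSpan ℝ (Set.range p)) ≤
        Module.finrank ℝ (Fin d → ℝ) := Submodule.finrank_le _
    simp [Module.finrank_pi] at h1 h2
    omega
  obtain ⟨I, x, hxI, hxIc⟩ := Convex.radon_partition hdep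
  have hxQ : x ∈ Q := by
    refine hQconv.convexHull_subset_iff.mpr ?_ hxI
    rintro y ⟨j, _, rfl⟩; exact hpQ j
  obtain ⟨_, ⟨i, rfl⟩, hxi⟩ := hcov hxQ
  simp only [Set.mem_setOf_eq] at hxi
  -- pick the side of the partition not containing i
  have key : ∀ (S : Set (Fin n)), i ∉ S → x ∈ convexHull ℝ (p '' S) → False := by
    intro S hiS hx
    have hconv : Convex ℝ {y : Fin d → ℝ | c i ≤ ∑ k, a i k * y k} := by
      have := convex_halfSpace_ge (𝕜 := ℝ)
        (f := fun y : Fin d → ℝ => ∑ k, a i k * y k) ?_ (c i)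
      · exact this
      · constructor
        · intro u v; simp [mul_add, Finset.sum_add_distrib]
        · intro r u; simp [Finset.mul_sum]; ring_nf
          exact Finset.sum_congr rfl fun k _ => by ring
    have hsub : p '' S ⊆ {y : Fin d → ℝ | c i ≤ ∑ k, a i k * y k} := by
      rintro y ⟨j, hjS, rfl⟩
      have hji : j ≠ i := fun h => hiS (h ▸ hjS)
      exact le_of_not_gt (hpuniq j i hji.symm)
    have := hconv.convexHull_subset_iff.mpr hsub hx
    exact absurd hxi (not_lt.mpr this)
  by_cases hiI : i ∈ I
  · exact key Iᶜ (by simp [hiI]) hxIc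
  · exact key I hiI hxI
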